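/- arXiv:1205.6433 — 3 statements merged into one kernel-verified Lean document; each statement's English description precedes it below -/
import Mathlib

section
/- Let p be a prime and F a finite field with Fintype.card F = p^2 and CharP F p, let α ∈ F generate the unit group Fˣ, and let f : F → ZMod (p^2 − 1) satisfy α ^ (f x).val = x for all nonzero x ∈ F. Let x₁, x₂ ∈ ZMod p be nonzero. Then the function g : ZMod p × ZMod p → ZMod (p^2 − 1) given by g (i, j) = f (((x₁ * i : ZMod p) : F) * α + ((x₂ * j : ZMod p) : F)) has the periodic Costas property, where (· : F) denotes the canonical ring map ZMod p → F. -/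
/-- The periodic Costas (distinct difference) property for a three-dimensional
array `g : ℤ_p × ℤ_p → ℤ_{p^2 - 1}`. -/
def PeriodicCostas2 (p n : ℕ) (g : ZMod p × ZMod p → ZMod n) : Prop :=
  ∀ h : ZMod p × ZMod p, h ≠ 0 → ∀ a b : ZMod p × ZMod p,
    a ≠ 0 → b ≠ 0 → a + h ≠ 0 → b + h ≠ 0 →
    g (a + h) - g a = g (b + h) - g b → a = b

/-- Applying the row-and-column multiplication `G1` to the three-dimensional
periodic Welch Costas array over `ℤ_p × ℤ_p` yields an array with the periodic
Costas property. -/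
theorem G1_welch_periodicCostas
    (p : ℕ) (hp : p.Prime)
    (F : Type*) [Field F] [Fintype F] (hF : Fintype.card F = p ^ 2) [CharP F p]
    (α : F) (hα : ∀ y : F, y ≠ 0 → ∃ k : ℕ, α ^ k = y)
    (f : F → ZMod (p ^ 2 - 1))
    (hf : ∀ y : F, y ≠ 0 → α ^ (f y).val = y)
    (x₁ x₂ : ZMod p) (hx₁ : x₁ ≠ 0) (hx₂ : x₂ ≠ 0) :
    PeriodicCostas2 p (p ^ 2 - 1) (fun ij =>
      f ((ZMod.castHom (dvd_refl p) F (x₁ * ij.1)) * α +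
         (ZMod.castHom (dvd_refl p) F (x₂ * ij.2)))) := by
  classical
  haveI : Fact p.Prime := ⟨hp⟩
  have hp2 : 2 ≤ p := hp.two_le
  have hp4 : 4 ≤ p ^ 2 := by nlinarith
  haveI : NeZero (p ^ 2 - 1) := ⟨by omega⟩
  -- α ≠ 0
  have hα0 : α ≠ 0 := by
    intro h0
    have huniv : (Finset.univ : Finset F) ⊆ {0, 1} := by
      intro y _
      rcases eq_or_ne y 0 with rfl | hy
      · simp
      · obtain ⟨k, hk⟩ := hα y hy
        rcases Nat.eq_zero_or_pos k with rfl | hk'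
        · simp only [pow_zero] at hk
          simp [← hk]
        · rw [h0, zero_pow hk'.ne'] at hk
          exact absurd hk.symm hy
    have h1 := Finset.card_le_card huniv
    have h2 : ({0, 1} : Finset F).card ≤ 2 :=
      (Finset.card_insert_le _ _).trans (by simp)
    rw [Finset.card_univ, hF] at h1
    omega
  set u : Fˣ := Units.mk0 α hα0 with hu
  have hord : orderOf u = p ^ 2 - 1 := by
    have hsurj : ∀ y : Fˣ, y ∈ Subgroup.zpowers u := by
      intro y
      obtain ⟨k, hk⟩ := hα y (Units.ne_zero y)
      exact ⟨k, by ext; push_cast; simpa [hu] using hk⟩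
    rw [orderOf_eq_card_of_forall_mem_zpowers hsurj, Nat.card_eq_fintype_card,
      Fintype.card_units, hF]
  have hαn : α ^ (p ^ 2 - 1) = 1 := by
    have h1 : u ^ (p ^ 2 - 1) = 1 := by rw [← hord]; exact pow_orderOf_eq_one u
    have h2 := congrArg Units.val h1
    simpa [hu, Units.val_pow_eq_pow_val] using h2
  have hadd : ∀ s t : ZMod (p ^ 2 - 1), α ^ (s + t).val = α ^ s.val * α ^ t.val := by
    intro s t
    rw [ZMod.val_add, ← pow_eq_pow_mod _ hαn, pow_add]
  -- α is not in the prime field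
  have hnotpf : ∀ e : ZMod p, α ≠ ZMod.castHom (dvd_refl p) F e := by
    intro e he
    have hpow : α ^ p = α := by rw [he, ← map_pow, ZMod.pow_card]
    have h1 : α ^ (p - 1) * α = α := by
      rw [← pow_succ, Nat.sub_add_cancel (by omega)]
      exact hpow
    have h2 : α ^ (p - 1) = 1 := mul_right_cancel₀ hα0 (h1.trans (one_mul α).symm)
    have hup : u ^ (p - 1) = 1 := by ext; push_cast; simpa [hu] using h2
    have hdvd := orderOf_dvd_of_pow_eq_one hup
    rw [hord] at hdvd
    have h3 := Nat.le_of_dvd (by omega) hdvd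
    have h4 : p < p ^ 2 := by nlinarith
    omega
  set c : ZMod p →+* F := ZMod.castHom (dvd_refl p) F with hc
  set φ : ZMod p × ZMod p → F := fun v => c (x₁ * v.1) * α + c (x₂ * v.2) with hφ
  have hφadd : ∀ v w, φ (v + w) = φ v + φ w := by
    intro v w
    simp only [hφ, Prod.fst_add, Prod.snd_add, mul_add, map_add]
    ring
  have hφ0 : ∀ v, φ v = 0 → v = 0 := by
    intro v hv
    simp only [hφ] at hv
    by_cases h1 : x₁ * v.1 = 0
    · rw [h1, map_zero, zero_mul, zero_add] at hv
      have h2 : x₂ * v.2 = 0 := c.injective (by simpa using hv)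
      have e1 : v.1 = 0 := (mul_eq_zero.mp h1).resolve_left hx₁
      have e2 : v.2 = 0 := (mul_eq_zero.mp h2).resolve_left hx₂
      exact Prod.ext e1 e2
    · exfalso
      have hc1 : c (x₁ * v.1) ≠ 0 := fun h => h1 (c.injective (by simpa using h))
      apply hnotpf (-(x₂ * v.2) * (x₁ * v.1)⁻¹)
      have hlin : α * c (x₁ * v.1) = -c (x₂ * v.2) := by linear_combination hv
      rw [map_mul, map_neg, map_inv₀, ← hlin, mul_assoc, mul_inv_cancel₀ hc1, mul_one]
  intro h hh a b ha hb hah hbh heq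
  have heq' : f (φ (a + h)) - f (φ a) = f (φ (b + h)) - f (φ b) := heq
  have key : ∀ v : ZMod p × ZMod p, v ≠ 0 → α ^ (f (φ v)).val = φ v := by
    intro v hv
    exact hf _ fun h0 => hv (hφ0 v h0)
  set d := f (φ (a + h)) - f (φ a) with hd
  have hda : α ^ d.val * φ a = φ (a + h) := by
    have hsum : d + f (φ a) = f (φ (a + h)) := by rw [hd]; ring
    calc α ^ d.val * φ a = α ^ d.val * α ^ (f (φ a)).val := by rw [key a ha]
      _ = α ^ ((d + f (φ a)).val) := (hadd _ _).symm
      _ = α ^ ((f (φ (a + h))).val) := by rw [hsum]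
      _ = φ (a + h) := key _ hah
  have hdb : α ^ d.val * φ b = φ (b + h) := by
    have hsum : d + f (φ b) = f (φ (b + h)) := by rw [heq']; ring
    calc α ^ d.val * φ b = α ^ d.val * α ^ (f (φ b)).val := by rw [key b hb]
      _ = α ^ ((d + f (φ b)).val) := (hadd _ _).symm
      _ = α ^ ((f (φ (b + h))).val) := by rw [hsum]
      _ = φ (b + h) := key _ hbh
  have e1 : (α ^ d.val - 1) * φ a = φ h := by
    rw [sub_mul, one_mul, hda, hφadd]; ring
  have e2 : (α ^ d.val - 1) * φ b = φ h := by
    rw [sub_mul, one_mul, hdb, hφadd]; ring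
  have hHne : φ h ≠ 0 := fun h0 => hh (hφ0 h h0)
  have hcne : α ^ d.val - 1 ≠ 0 := by
    intro h0
    exact hHne (by rw [← e1, h0, zero_mul])
  have hab : φ a = φ b := mul_left_cancel₀ hcne (e1.trans e2.symm)
  have hz : φ (a - b) = 0 := by
    have h2 := hφadd (a - b) b
    rw [sub_add_cancel, hab] at h2
    exact right_eq_add.mp h2
  exact sub_eq_zero.mp (hφ0 _ hz)
end

section
/- Let p be a prime, m ≥ 1, and F a finite field with Fintype.card F = p^m and CharP F p; let α ∈ F generate the unit group Fˣ, and let f : F → ZMod (p^m − 1) satisfy α ^ (f x).val = x for all nonzero x ∈ F. Let x : Fin m → ZMod p satisfy x i ≠ 0 for every i. Then the function g : (Fin m → ZMod p) → ZMod (p^m − 1) given by g a = f (∑ i, ((x i * a i : ZMod p) : F) * α ^ (m − 1 − (i : ℕ))) has the periodic Costas property, where (· : F) denotes the canonical ring map ZMod p → F. -/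
/-- The periodic Costas (distinct difference) property for a multidimensional
array `g : (ℤ_p)^m → ℤ_{p^m - 1}`. -/
def PeriodicCostas (p m n : ℕ) (g : (Fin m → ZMod p) → ZMod n) : Prop :=
  ∀ h : Fin m → ZMod p, h ≠ 0 → ∀ a b : Fin m → ZMod p,
    a ≠ 0 → b ≠ 0 → a + h ≠ 0 → b + h ≠ 0 →
    g (a + h) - g a = g (b + h) - g b → a = b

private lemma zmod2_eq_one (c : ZMod 2) (hc : c ≠ 0) : c = 1 := by revert c; decide

private lemma zmod2_one_add_one : (1 + 1 : ZMod 2) = 0 := by decide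

/-- Applying the multiplication permutation `G1` with multipliers `x` to the
`(m+1)`-dimensional periodic Welch Costas array over `(ℤ_p)^m` yields an array
with the periodic Costas property. -/
theorem G1_general_welch_periodicCostas
    (p m : ℕ) (hp : p.Prime) (hm : 1 ≤ m)
    (F : Type*) [Field F] [Fintype F] (hF : Fintype.card F = p ^ m) [CharP F p]
    (α : F) (hα : ∀ y : F, y ≠ 0 → ∃ k : ℕ, α ^ k = y)
    (f : F → ZMod (p ^ m - 1))
    (hf : ∀ y : F, y ≠ 0 → α ^ (f y).val = y)
    (x : Fin m → ZMod p) (hx : ∀ i, x i ≠ 0) :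
    PeriodicCostas p m (p ^ m - 1) (fun a =>
      f (∑ i, (ZMod.castHom (dvd_refl p) F (x i * a i)) * α ^ (m - 1 - (i : ℕ)))) := by
  intro h hh a b ha hb hah hbh heq
  haveI : Fact p.Prime := ⟨hp⟩
  letI : Algebra (ZMod p) F := ZMod.algebra _ _
  have h2 : 2 ≤ p ^ m := by
    calc 2 ≤ p := hp.two_le
    _ = p ^ 1 := (pow_one p).symm
    _ ≤ p ^ m := Nat.pow_le_pow_right hp.pos hm
  rcases Nat.lt_or_ge (p ^ m) 3 with hsmall | hbig
  · -- degenerate case p = 2, m = 1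
    have hpm : p ^ m = 2 := by omega
    have hp2 : p = 2 := ((Nat.prime_dvd_prime_iff_eq hp Nat.prime_two).mp
      (hpm ▸ dvd_pow_self p (by omega : m ≠ 0)))
    have hm1 : m = 1 := by
      subst hp2
      rcases Nat.lt_or_ge m 2 with h' | h'
      · omega
      · exfalso; have : 2 ^ 2 ≤ 2 ^ m := Nat.pow_le_pow_right (by norm_num) h'; omega
    subst hm1 hp2
    exfalso
    apply hah
    funext i
    have ha0 : a 0 ≠ 0 := fun h0 => ha (funext fun j => by rw [Subsingleton.elim j 0]; exact h0)
    have hh0 : h 0 ≠ 0 := fun h0 => hh (funext fun j => by rw [Subsingleton.elim j 0]; exact h0)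
    rw [Subsingleton.elim i 0]
    show a 0 + h 0 = 0
    rw [zmod2_eq_one _ ha0, zmod2_eq_one _ hh0, zmod2_one_add_one]
  · -- main case
    haveI : NeZero (p ^ m - 1) := ⟨by omega⟩
    have hα0 : α ≠ 0 := by
      classical
      intro h0
      have hall : ∀ y : F, y = 0 ∨ y = 1 := by
        intro y
        rcases eq_or_ne y 0 with hy | hy
        · exact Or.inl hy
        · obtain ⟨k, hk⟩ := hα y hy
          rcases Nat.eq_zero_or_pos k with rfl | hk'
          · right; simpa using hk.symm
          · exfalso; apply hy; rw [← hk, h0, zero_pow (by omega)]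
      have hsub : (Finset.univ : Finset F) ⊆ ({0, 1} : Finset F) := fun y _ => by
        rcases hall y with rfl | rfl <;> simp
      have hcard : Fintype.card F ≤ 2 :=
        le_trans (Finset.card_le_card hsub) (le_trans (Finset.card_insert_le _ _) (by simp))
      omega
    have hα1 : α ^ (p ^ m - 1) = 1 := by
      have := FiniteField.pow_card_sub_one_eq_one α hα0
      rwa [hF] at this
    have hpow : ∀ u v : ZMod (p ^ m - 1), α ^ (u + v).val = α ^ u.val * α ^ v.val := by
      intro u v
      rw [ZMod.val_add, ← pow_eq_pow_mod _ hα1, pow_add]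
    -- the linear map φ
    set φ : (Fin m → ZMod p) → F := fun c => ∑ i, (x i * c i) • α ^ (m - 1 - (i : ℕ)) with hφ
    have hcast : ∀ c : ZMod p, (ZMod.castHom (dvd_refl p) F) c = algebraMap (ZMod p) F c :=
      fun c => RingHom.congr_fun (Subsingleton.elim _ _) c
    have hg : ∀ c : Fin m → ZMod p,
        (∑ i, (ZMod.castHom (dvd_refl p) F (x i * c i)) * α ^ (m - 1 - (i : ℕ))) = φ c := by
      intro c
      simp only [hφ, hcast, Algebra.smul_def]
    have hadd : ∀ c d : Fin m → ZMod p, φ (c + d) = φ c + φ d := by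
      intro c d
      simp only [hφ, Pi.add_apply, mul_add, add_smul, Finset.sum_add_distrib]
    -- linear independence of the powers of α
    haveI : Module.Finite (ZMod p) F := Module.Finite.of_finite
    have htop : IntermediateField.adjoin (ZMod p) {α} = ⊤ := by
      rw [eq_top_iff]
      intro y _
      rcases eq_or_ne y 0 with rfl | hy
      · exact zero_mem _
      · obtain ⟨k, hk⟩ := hα y hy
        exact hk ▸ pow_mem (IntermediateField.mem_adjoin_simple_self _ α) k
    have hfr : Module.finrank (ZMod p) F = m := by
      have hc := Module.card_eq_pow_finrank (K := ZMod p) (V := F)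
      rw [ZMod.card, hF] at hc
      exact (Nat.pow_right_injective hp.two_le hc.symm)
    have hdeg : (minpoly (ZMod p) α).natDegree = m := by
      have h1 := IntermediateField.adjoin.finrank (K := ZMod p) (Algebra.IsIntegral.isIntegral α)
      rw [htop, IntermediateField.finrank_top', hfr] at h1
      exact h1.symm
    have li0 := linearIndependent_pow (K := ZMod p) α
    rw [hdeg] at li0
    have li : LinearIndependent (ZMod p) fun i : Fin m => α ^ (m - 1 - (i : ℕ)) := by
      have := li0.comp Fin.rev Fin.rev_injective
      convert this using 2 with i
      congr 1
      rw [Fin.val_rev]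
      omega
    have hinj : ∀ c d : Fin m → ZMod p, φ c = φ d → c = d := by
      intro c d hcd
      have hz : ∑ i, (x i * c i - x i * d i) • α ^ (m - 1 - (i : ℕ)) = 0 := by
        simp only [sub_smul, Finset.sum_sub_distrib]
        exact sub_eq_zero.mpr hcd
      have := Fintype.linearIndependent_iff.mp li _ hz
      funext i
      have hi := this i
      rw [sub_eq_zero] at hi
      exact mul_left_cancel₀ (hx i) hi
    have hφ0 : ∀ c : Fin m → ZMod p, c ≠ 0 → φ c ≠ 0 := by
      intro c hc h0
      apply hc
      apply hinj
      rw [h0, hφ]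
      simp
    -- main computation
    simp only [hg] at heq
    have key : f (φ (a + h)) + f (φ b) = f (φ (b + h)) + f (φ a) := by
      rw [← sub_eq_sub_iff_add_eq_add]; exact heq
    have key2 : φ (a + h) * φ b = φ (b + h) * φ a := by
      have := congrArg (fun u : ZMod (p ^ m - 1) => α ^ u.val) key
      simp only [hpow] at this
      rwa [hf _ (hφ0 _ hah), hf _ (hφ0 _ ha), hf _ (hφ0 _ hbh), hf _ (hφ0 _ hb)] at this
    rw [hadd, hadd, add_mul, add_mul] at key2
    have hba : φ h * φ b = φ h * φ a := by
      have hab : φ a * φ b = φ b * φ a := mul_comm _ _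
      linear_combination key2 - hab
    have : φ b = φ a := mul_left_cancel₀ (hφ0 h hh) hba
    exact (hinj b a this).symm
end

section
/- Let p be a prime and F a finite field with Fintype.card F = p^2 and CharP F p, let α ∈ F generate the unit group Fˣ, and let f : F → ZMod (p^2 − 1) satisfy α ^ (f x).val = x for all nonzero x ∈ F. Let x₁, x₂ ∈ ZMod p satisfy x₁ * x₂ ≠ 1. Then the function g : ZMod p × ZMod p → ZMod (p^2 − 1) given by g (i, j) = f (((i + x₂ * j : ZMod p) : F) * α + ((j + x₁ * i : ZMod p) : F)) has the periodic Costas property, where (· : F) denotes the canonical ring map ZMod p → F. -/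
/-- Applying the row-and-column shear `G2` with parameters `x₁, x₂` to the
three-dimensional periodic Welch Costas array over `ℤ_p × ℤ_p` yields an array
with the periodic Costas property. -/
theorem G2_welch_periodicCostas
    (p : ℕ) (hp : p.Prime)
    (F : Type*) [Field F] [Fintype F] (hF : Fintype.card F = p ^ 2) [CharP F p]
    (α : F) (hα : ∀ y : F, y ≠ 0 → ∃ k : ℕ, α ^ k = y)
    (f : F → ZMod (p ^ 2 - 1))
    (hf : ∀ y : F, y ≠ 0 → α ^ (f y).val = y)
    (x₁ x₂ : ZMod p) (hx : x₁ * x₂ ≠ 1) :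
    PeriodicCostas2 p (p ^ 2 - 1) (fun ij =>
      f ((ZMod.castHom (dvd_refl p) F (ij.1 + x₂ * ij.2)) * α +
         (ZMod.castHom (dvd_refl p) F (ij.2 + x₁ * ij.1)))) := by
  haveI := Fact.mk hp
  have hp2 : 2 ≤ p := hp.two_le
  have hn4 : 4 ≤ p ^ 2 := by nlinarith
  haveI : NeZero (p ^ 2 - 1) := ⟨by omega⟩
  set ρ : ZMod p →+* F := ZMod.castHom (dvd_refl p) F with hρ
  -- α is not in the range of the prime-field embedding ρ
  have hnr : ∀ c : ZMod p, ρ c ≠ α := by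
    intro c hc
    have hsurj : Function.Surjective ρ := by
      intro y
      by_cases hy : y = 0
      · exact ⟨0, by simp [hy]⟩
      · obtain ⟨k, hk⟩ := hα y hy
        exact ⟨c ^ k, by rw [map_pow, hc, hk]⟩
    have hcard := Fintype.card_le_of_surjective ρ hsurj
    rw [hF, ZMod.card] at hcard
    nlinarith
  have hα0 : α ≠ 0 := fun h0 => hnr 0 (by simp [h0])
  have horder : α ^ (p ^ 2 - 1) = 1 := by
    have := FiniteField.pow_card_sub_one_eq_one α hα0
    rwa [hF] at this
  have hpowmod : ∀ m : ℕ, α ^ (m % (p ^ 2 - 1)) = α ^ m := by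
    intro m
    conv_rhs => rw [← Nat.mod_add_div m (p ^ 2 - 1)]
    rw [pow_add, pow_mul, horder, one_pow, mul_one]
  have hval : ∀ u v : ZMod (p ^ 2 - 1), α ^ (u + v).val = α ^ u.val * α ^ v.val := by
    intro u v
    rw [ZMod.val_add, hpowmod, pow_add]
  set φ : ZMod p × ZMod p → F :=
    fun ij => ρ (ij.1 + x₂ * ij.2) * α + ρ (ij.2 + x₁ * ij.1) with hφ
  have φ_add : ∀ u v, φ (u + v) = φ u + φ v := by
    intro u v
    simp only [hφ, Prod.fst_add, Prod.snd_add, map_add, map_mul]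
    ring
  have φ_inj0 : ∀ u, φ u = 0 → u = 0 := by
    intro u hu
    obtain ⟨i, j⟩ := u
    simp only [hφ] at hu
    by_cases h1 : ρ (i + x₂ * j) = 0
    · have h2 : ρ (j + x₁ * i) = 0 := by rw [h1] at hu; simpa using hu
      have hinj : Function.Injective ρ := ρ.injective
      have e1 : i + x₂ * j = 0 := hinj (by simpa using h1)
      have e2 : j + x₁ * i = 0 := hinj (by simpa using h2)
      have hj : (1 - x₁ * x₂) * j = 0 := by linear_combination e2 - x₁ * e1
      have hx' : (1 : ZMod p) - x₁ * x₂ ≠ 0 := sub_ne_zero.mpr (Ne.symm hx)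
      have hj0 : j = 0 := by
        rcases mul_eq_zero.mp hj with h0 | h0
        · exact absurd h0 hx'
        · exact h0
      have hi0 : i = 0 := by rw [hj0, mul_zero, add_zero] at e1; exact e1
      simp [hi0, hj0, Prod.ext_iff]
    · exact (hnr ((-(j + x₁ * i)) * (i + x₂ * j)⁻¹) (by
        rw [map_mul, map_neg, map_inv₀, mul_inv_eq_iff_eq_mul₀ h1]
        linear_combination -hu)).elim
  intro h hh a b ha hb hah hbh heq
  have key : ∀ u : ZMod p × ZMod p, u ≠ 0 → α ^ (f (φ u)).val = φ u ∧ φ u ≠ 0 := by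
    intro u hu
    have hne : φ u ≠ 0 := fun h0 => hu (φ_inj0 u h0)
    exact ⟨hf _ hne, hne⟩
  have step : ∀ u : ZMod p × ZMod p, u ≠ 0 → u + h ≠ 0 →
      α ^ ((f (φ (u + h)) - f (φ u)).val) * φ u = φ (u + h) := by
    intro u hu huh
    calc α ^ ((f (φ (u + h)) - f (φ u)).val) * φ u
        = α ^ ((f (φ (u + h)) - f (φ u)).val) * α ^ ((f (φ u)).val) := by
          rw [(key u hu).1]
      _ = α ^ ((f (φ (u + h)) - f (φ u) + f (φ u)).val) := (hval _ _).symm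
      _ = φ (u + h) := by rw [sub_add_cancel, (key (u + h) huh).1]
  have heq' : f (φ (a + h)) - f (φ a) = f (φ (b + h)) - f (φ b) := heq
  have ea := step a ha hah
  have eb := step b hb hbh
  rw [heq'] at ea
  have hmul : φ (a + h) * φ b = φ (b + h) * φ a := by
    linear_combination φ a * eb - φ b * ea
  rw [φ_add a h, φ_add b h] at hmul
  have hcancel : φ h * (φ b - φ a) = 0 := by linear_combination hmul
  have hφh : φ h ≠ 0 := (key h hh).2
  have hba : φ b = φ a := by
    rcases mul_eq_zero.mp hcancel with h0 | h0
    · exact absurd h0 hφh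
    · exact sub_eq_zero.mp h0
  have hz : φ (a - b) = 0 := by
    have hsum := φ_add (a - b) b
    rw [sub_add_cancel] at hsum
    linear_combination -hsum - hba
  have := φ_inj0 _ hz
  exact sub_eq_zero.mp this
end
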